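/- Let α ∈ (0, π] and let G, Γ₁, Γ₂ be as in the context. Let u : ℝ² → ℝ be continuous on cl(G), continuously differentiable on an open set containing cl(G) \ {0}, harmonic on G, with u(x₁, 0) = 0 for all x₁ > 0 and −sin α · ∂u/∂x₁ + cos α · ∂u/∂x₂ = 0 at every point of Γ₂. Assume there exist constants C > 0 and δ > 0 such that for all x ∈ cl(G) \ {0}: |u(x)|·|∇u(x)| ≤ C|x|^{δ−1} whenever 0 < |x| ≤ 1, and ≤ C|x|^{−δ−1} whenever |x| ≥ 1, and assume |∇u|² is integrable on G. Then u = 0 on G. -/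

import Mathlib

open MeasureTheory

/-- The open plane sector `G = {(r cos θ, r sin θ) : r > 0, 0 < θ < α}` of opening
angle `α`. -/
def sector (α : ℝ) : Set (ℝ × ℝ) :=
  {p | ∃ r θ : ℝ, 0 < r ∧ 0 < θ ∧ θ < α ∧ p = (r * Real.cos θ, r * Real.sin θ)}

/-- First partial derivative `∂u/∂x₁`. -/
noncomputable def pd1 (u : ℝ × ℝ → ℝ) (x : ℝ × ℝ) : ℝ := fderiv ℝ u x (1, 0)

/-- Second partial derivative `∂u/∂x₂`. -/
noncomputable def pd2 (u : ℝ × ℝ → ℝ) (x : ℝ × ℝ) : ℝ := fderiv ℝ u x (0, 1)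

/-- Euclidean norm `|∇u(x)|` of the gradient. -/
noncomputable def gradNorm (u : ℝ × ℝ → ℝ) (x : ℝ × ℝ) : ℝ :=
  Real.sqrt (pd1 u x ^ 2 + pd2 u x ^ 2)

/-- Squared Euclidean norm `|∇u(x)|²` of the gradient. -/
noncomputable def gradSq (u : ℝ × ℝ → ℝ) (x : ℝ × ℝ) : ℝ :=
  pd1 u x ^ 2 + pd2 u x ^ 2

/-- `u` is harmonic on `G`: at every point of `G` it is twice differentiable and
`∂²u/∂x₁² + ∂²u/∂x₂² = 0`. -/
def HarmonicOnSector (α : ℝ) (u : ℝ × ℝ → ℝ) : Prop :=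
  ∀ x ∈ sector α, DifferentiableAt ℝ u x ∧ DifferentiableAt ℝ (fderiv ℝ u) x ∧
    fderiv ℝ (fderiv ℝ u) x (1, 0) (1, 0) + fderiv ℝ (fderiv ℝ u) x (0, 1) (0, 1) = 0

/-- Zero Neumann data on `Γ₂ = {(r cos α, r sin α) : r > 0}`:
`−sin α · ∂u/∂x₁ + cos α · ∂u/∂x₂ = 0` there. -/
def NeumannOnGamma2 (α : ℝ) (u : ℝ × ℝ → ℝ) : Prop :=
  ∀ r : ℝ, 0 < r →
    -Real.sin α * pd1 u (r * Real.cos α, r * Real.sin α)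
      + Real.cos α * pd2 u (r * Real.cos α, r * Real.sin α) = 0

open Real Set Filter Topology
section SectorAux
noncomputable def Phi (p : ℝ × ℝ) : ℝ × ℝ :=
  (Real.exp p.1 * Real.cos p.2, Real.exp p.1 * Real.sin p.2)

lemma pair_decomp (x y : ℝ) : ((x, y) : ℝ × ℝ) = x • ((1:ℝ), (0:ℝ)) + y • ((0:ℝ), (1:ℝ)) := by
  simp [Prod.ext_iff]

lemma clm_apply_eq (B : ℝ × ℝ →L[ℝ] ℝ) (z : ℝ × ℝ) :
    B z = z.1 * B (1, 0) + z.2 * B (0, 1) := by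
  have hz : z = z.1 • ((1:ℝ), (0:ℝ)) + z.2 • ((0:ℝ), (1:ℝ)) := by
    rw [← pair_decomp]
  conv_lhs => rw [hz]
  rw [map_add, _root_.map_smul, _root_.map_smul, smul_eq_mul, smul_eq_mul]

lemma clm2_apply_eq (A : ℝ × ℝ →L[ℝ] ((ℝ × ℝ) →L[ℝ] ℝ)) (z : ℝ × ℝ) :
    A z = z.1 • A (1, 0) + z.2 • A (0, 1) := by
  have hz : z = z.1 • ((1:ℝ), (0:ℝ)) + z.2 • ((0:ℝ), (1:ℝ)) := by
    rw [← pair_decomp]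
  conv_lhs => rw [hz]
  rw [map_add, _root_.map_smul, _root_.map_smul]

noncomputable def LL (p : ℝ × ℝ) : ℝ × ℝ →L[ℝ] ℝ × ℝ :=
  ((Real.exp p.1 * Real.cos p.2) • ContinuousLinearMap.fst ℝ ℝ ℝ
      - (Real.exp p.1 * Real.sin p.2) • ContinuousLinearMap.snd ℝ ℝ ℝ).prod
    ((Real.exp p.1 * Real.sin p.2) • ContinuousLinearMap.fst ℝ ℝ ℝ
      + (Real.exp p.1 * Real.cos p.2) • ContinuousLinearMap.snd ℝ ℝ ℝ)

lemma LL_apply (p w : ℝ × ℝ) :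
    LL p w = (Real.exp p.1 * Real.cos p.2 * w.1 - Real.exp p.1 * Real.sin p.2 * w.2,
      Real.exp p.1 * Real.sin p.2 * w.1 + Real.exp p.1 * Real.cos p.2 * w.2) := by
  simp [LL]

lemma hasFDerivAt_Phi (p : ℝ × ℝ) : HasFDerivAt Phi (LL p) p := by
  have h1 : HasFDerivAt (fun q : ℝ × ℝ => Real.exp q.1)
      (Real.exp p.1 • ContinuousLinearMap.fst ℝ ℝ ℝ) p :=
    (Real.hasDerivAt_exp p.1).comp_hasFDerivAt p (hasFDerivAt_fst)
  have h2 : HasFDerivAt (fun q : ℝ × ℝ => Real.cos q.2)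
      ((-Real.sin p.2) • ContinuousLinearMap.snd ℝ ℝ ℝ) p :=
    (Real.hasDerivAt_cos p.2).comp_hasFDerivAt p (hasFDerivAt_snd)
  have h3 : HasFDerivAt (fun q : ℝ × ℝ => Real.sin q.2)
      ((Real.cos p.2) • ContinuousLinearMap.snd ℝ ℝ ℝ) p :=
    (Real.hasDerivAt_sin p.2).comp_hasFDerivAt p (hasFDerivAt_snd)
  have hc := (h1.mul h2).prodMk (h1.mul h3)
  refine hc.congr_fderiv ?_
  apply ContinuousLinearMap.ext
  rintro ⟨w1, w2⟩
  simp [LL, Prod.ext_iff]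
  constructor <;> ring

noncomputable def vv (u : ℝ × ℝ → ℝ) (p : ℝ × ℝ) : ℝ := u (Phi p)

noncomputable def w1 (u : ℝ × ℝ → ℝ) (p : ℝ × ℝ) : ℝ :=
  Real.exp p.1 * Real.cos p.2 * pd1 u (Phi p) + Real.exp p.1 * Real.sin p.2 * pd2 u (Phi p)

noncomputable def w2 (u : ℝ × ℝ → ℝ) (p : ℝ × ℝ) : ℝ :=
  (-(Real.exp p.1 * Real.sin p.2)) * pd1 u (Phi p)
    + Real.exp p.1 * Real.cos p.2 * pd2 u (Phi p)

noncomputable def FF (u : ℝ × ℝ → ℝ) (p : ℝ × ℝ) : ℝ := vv u p * w1 u p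
noncomputable def GG (u : ℝ × ℝ → ℝ) (p : ℝ × ℝ) : ℝ := vv u p * w2 u p

set_option maxHeartbeats 2000000 in
lemma key {α : ℝ} (u : ℝ × ℝ → ℝ) (hu_harm : HarmonicOnSector α u) {p : ℝ × ℝ}
    (hp : Phi p ∈ sector α) :
    DifferentiableAt ℝ (FF u) p ∧ DifferentiableAt ℝ (GG u) p ∧
      fderiv ℝ (FF u) p (1, 0) + fderiv ℝ (GG u) p (0, 1) = w1 u p ^ 2 + w2 u p ^ 2 := by
  obtain ⟨hz1, hz2, hlap⟩ := hu_harm _ hp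
  have hPhi := hasFDerivAt_Phi p
  set z := Phi p with hzdef
  set A := fderiv ℝ (fderiv ℝ u) z with hA
  set E1 : (ℝ × ℝ →L[ℝ] ℝ) →L[ℝ] ℝ := ContinuousLinearMap.apply ℝ ℝ ((1:ℝ), (0:ℝ)) with hE1
  set E2 : (ℝ × ℝ →L[ℝ] ℝ) →L[ℝ] ℝ := ContinuousLinearMap.apply ℝ ℝ ((0:ℝ), (1:ℝ)) with hE2
  have hv : HasFDerivAt (vv u) ((fderiv ℝ u z).comp (LL p)) p :=
    hz1.hasFDerivAt.comp p hPhi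
  have hg1 : HasFDerivAt (fun q : ℝ × ℝ => pd1 u (Phi q)) ((E1.comp A).comp (LL p)) p :=
    by have h := (E1.hasFDerivAt.comp z hz2.hasFDerivAt).comp p hPhi; exact h
  have hg2 : HasFDerivAt (fun q : ℝ × ℝ => pd2 u (Phi q)) ((E2.comp A).comp (LL p)) p :=
    by have h := (E2.hasFDerivAt.comp z hz2.hasFDerivAt).comp p hPhi; exact h
  have hexp : HasFDerivAt (fun q : ℝ × ℝ => Real.exp q.1)
      (Real.exp p.1 • ContinuousLinearMap.fst ℝ ℝ ℝ) p :=
    (Real.hasDerivAt_exp p.1).comp_hasFDerivAt p (hasFDerivAt_fst)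
  have hcos : HasFDerivAt (fun q : ℝ × ℝ => Real.cos q.2)
      ((-Real.sin p.2) • ContinuousLinearMap.snd ℝ ℝ ℝ) p :=
    (Real.hasDerivAt_cos p.2).comp_hasFDerivAt p (hasFDerivAt_snd)
  have hsin : HasFDerivAt (fun q : ℝ × ℝ => Real.sin q.2)
      ((Real.cos p.2) • ContinuousLinearMap.snd ℝ ℝ ℝ) p :=
    (Real.hasDerivAt_sin p.2).comp_hasFDerivAt p (hasFDerivAt_snd)
  have hw1 : HasFDerivAt (w1 u) _ p :=
    ((hexp.mul hcos).mul hg1).add ((hexp.mul hsin).mul hg2)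
  have hw2 : HasFDerivAt (w2 u) _ p :=
    (((hexp.mul hsin).neg).mul hg1).add ((hexp.mul hcos).mul hg2)
  have hF : HasFDerivAt (FF u) _ p := hv.mul hw1
  have hG : HasFDerivAt (GG u) _ p := hv.mul hw2
  refine ⟨hF.differentiableAt, hG.differentiableAt, ?_⟩
  rw [hF.fderiv, hG.fderiv]
  simp only [ContinuousLinearMap.add_apply, ContinuousLinearMap.smul_apply,
    ContinuousLinearMap.comp_apply, ContinuousLinearMap.coe_fst',
    ContinuousLinearMap.coe_snd', ContinuousLinearMap.neg_apply, LL_apply,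
    ContinuousLinearMap.apply_apply, smul_eq_mul, mul_one, mul_zero, sub_zero,
    add_zero, zero_add, zero_sub, neg_neg, neg_zero]
  rw [clm_apply_eq (fderiv ℝ u z) (Real.exp p.1 * Real.cos p.2, Real.exp p.1 * Real.sin p.2),
    clm_apply_eq (fderiv ℝ u z) (-(Real.exp p.1 * Real.sin p.2), Real.exp p.1 * Real.cos p.2),
    clm2_apply_eq A (Real.exp p.1 * Real.cos p.2, Real.exp p.1 * Real.sin p.2),
    clm2_apply_eq A (-(Real.exp p.1 * Real.sin p.2), Real.exp p.1 * Real.cos p.2)]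
  simp only [ContinuousLinearMap.add_apply, ContinuousLinearMap.smul_apply, smul_eq_mul]
  simp only [w1, w2, vv, pd1, pd2, ← hzdef]
  simp only [map_add, _root_.map_smul, hE1, hE2, ContinuousLinearMap.apply_apply, smul_eq_mul,
    Pi.mul_apply, Pi.neg_apply]
  linear_combination (u z * Real.exp p.1 ^ 2 * (Real.sin p.2 ^ 2 + Real.cos p.2 ^ 2)) * hlap

lemma Phi_mem_sector {α : ℝ} {p : ℝ × ℝ} (h1 : 0 < p.2) (h2 : p.2 < α) :
    Phi p ∈ sector α :=
  ⟨Real.exp p.1, p.2, Real.exp_pos _, h1, h2, rfl⟩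

lemma polar_mem_closure {α : ℝ} (hα : 0 < α) {r θ : ℝ} (hr : 0 < r)
    (h1 : 0 ≤ θ) (h2 : θ ≤ α) :
    ((r * Real.cos θ, r * Real.sin θ) : ℝ × ℝ) ∈ closure (sector α) := by
  rcases h1.eq_or_lt with h1 | h1
  · -- θ = 0 : limit from the right
    subst h1
    have hne : (𝓝[Set.Ioo (0:ℝ) α] 0).NeBot := by
      rw [nhdsWithin_Ioo_eq_nhdsGT hα]
      infer_instance
    have hcont : Continuous fun t : ℝ => ((r * Real.cos t, r * Real.sin t) : ℝ × ℝ) := by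
      fun_prop
    have htd : Filter.Tendsto (fun t : ℝ => ((r * Real.cos t, r * Real.sin t) : ℝ × ℝ))
        (𝓝[Set.Ioo (0:ℝ) α] 0) (𝓝 ((r * Real.cos 0, r * Real.sin 0) : ℝ × ℝ)) :=
      (hcont.tendsto 0).mono_left nhdsWithin_le_nhds
    refine mem_closure_of_tendsto htd ?_
    filter_upwards [self_mem_nhdsWithin] with t ht
    exact ⟨r, t, hr, ht.1, ht.2, rfl⟩
  rcases h2.lt_or_eq with h2 | h2
  · exact subset_closure ⟨r, θ, hr, h1, h2, rfl⟩
  · -- θ = α : limit from the left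
    subst h2
    have hne : (𝓝[Set.Ioo (0:ℝ) θ] θ).NeBot := by
      rw [nhdsWithin_Ioo_eq_nhdsLT h1]
      infer_instance
    have hcont : Continuous fun t : ℝ => ((r * Real.cos t, r * Real.sin t) : ℝ × ℝ) := by
      fun_prop
    have htd : Filter.Tendsto (fun t : ℝ => ((r * Real.cos t, r * Real.sin t) : ℝ × ℝ))
        (𝓝[Set.Ioo (0:ℝ) θ] θ) (𝓝 ((r * Real.cos θ, r * Real.sin θ) : ℝ × ℝ)) :=
      (hcont.tendsto θ).mono_left nhdsWithin_le_nhds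
    refine mem_closure_of_tendsto htd ?_
    filter_upwards [self_mem_nhdsWithin] with t ht
    exact ⟨r, t, hr, ht.1, ht.2, rfl⟩

lemma Phi_ne_zero (p : ℝ × ℝ) : Phi p ≠ 0 := by
  intro h
  have h1 : Real.exp p.1 * Real.cos p.2 = 0 := congrArg Prod.fst h
  have h2 : Real.exp p.1 * Real.sin p.2 = 0 := congrArg Prod.snd h
  have he := (Real.exp_pos p.1).ne'
  have hc : Real.cos p.2 = 0 := by
    rcases mul_eq_zero.1 h1 with h | h
    · exact absurd h he
    · exact h
  have hs : Real.sin p.2 = 0 := by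
    rcases mul_eq_zero.1 h2 with h | h
    · exact absurd h he
    · exact h
  have := Real.sin_sq_add_cos_sq p.2
  rw [hc, hs] at this
  norm_num at this

lemma Phi_mem_closure {α : ℝ} (hα : 0 < α) {p : ℝ × ℝ} (h1 : 0 ≤ p.2) (h2 : p.2 ≤ α) :
    Phi p ∈ closure (sector α) \ {(0 : ℝ × ℝ)} :=
  ⟨polar_mem_closure hα (Real.exp_pos p.1) h1 h2, Phi_ne_zero p⟩

lemma norm_Phi (p : ℝ × ℝ) :
    Real.sqrt ((Phi p).1 ^ 2 + (Phi p).2 ^ 2) = Real.exp p.1 := by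
  have : (Phi p).1 ^ 2 + (Phi p).2 ^ 2 = Real.exp p.1 ^ 2 := by
    have := Real.sin_sq_add_cos_sq p.2
    simp only [Phi]
    nlinarith
  rw [this, Real.sqrt_sq (Real.exp_pos p.1).le]

lemma continuous_Phi : Continuous Phi := by
  unfold Phi; fun_prop

section energy

variable {α : ℝ} {u : ℝ × ℝ → ℝ} {U : Set (ℝ × ℝ)} {C δ : ℝ}

/-- Bound on `|F|` on the vertical segment `{s} × [0, α]`. -/
lemma FF_bound (hα₀ : 0 < α) (hUsub : closure (sector α) \ {(0:ℝ×ℝ)} ⊆ U)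
    (hC : 0 < C) (hδ : 0 < δ)
    (hdec : ∀ x ∈ closure (sector α) \ {(0 : ℝ × ℝ)},
        (Real.sqrt (x.1 ^ 2 + x.2 ^ 2) ≤ 1 →
          |u x| * gradNorm u x ≤ C * Real.sqrt (x.1 ^ 2 + x.2 ^ 2) ^ (δ - 1)) ∧
        (1 ≤ Real.sqrt (x.1 ^ 2 + x.2 ^ 2) →
          |u x| * gradNorm u x ≤ C * Real.sqrt (x.1 ^ 2 + x.2 ^ 2) ^ (-δ - 1)))
    {p : ℝ × ℝ} (h1 : 0 ≤ p.2) (h2 : p.2 ≤ α) :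
    |FF u p| ≤ C * Real.exp p.1 * Real.exp p.1 ^ (if 0 ≤ p.1 then -δ - 1 else δ - 1) := by
  have hzmem := Phi_mem_closure hα₀ h1 h2
  have hE := Real.exp_pos p.1
  -- |w1| ≤ exp p.1 * gradNorm
  have hsq : (w1 u p) ^ 2 ≤ (Real.exp p.1) ^ 2 *
      (pd1 u (Phi p) ^ 2 + pd2 u (Phi p) ^ 2) := by
    have hsc := Real.sin_sq_add_cos_sq p.2
    have := sq_nonneg (Real.sin p.2 * pd1 u (Phi p) - Real.cos p.2 * pd2 u (Phi p))
    simp only [w1]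
    nlinarith [sq_nonneg (Real.exp p.1)]
  have hw1 : |w1 u p| ≤ Real.exp p.1 * gradNorm u (Phi p) := by
    have h0 : (0:ℝ) ≤ pd1 u (Phi p) ^ 2 + pd2 u (Phi p) ^ 2 := by positivity
    calc |w1 u p| = Real.sqrt ((w1 u p) ^ 2) := (Real.sqrt_sq_eq_abs _).symm
      _ ≤ Real.sqrt ((Real.exp p.1) ^ 2 * (pd1 u (Phi p) ^ 2 + pd2 u (Phi p) ^ 2)) :=
          Real.sqrt_le_sqrt hsq
      _ = Real.exp p.1 * gradNorm u (Phi p) := by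
          rw [Real.sqrt_mul (sq_nonneg _), Real.sqrt_sq hE.le]; rfl
  have hgn : 0 ≤ gradNorm u (Phi p) := Real.sqrt_nonneg _
  have hFa : |FF u p| ≤ Real.exp p.1 * (|u (Phi p)| * gradNorm u (Phi p)) := by
    rw [FF, abs_mul]
    calc |vv u p| * |w1 u p| ≤ |vv u p| * (Real.exp p.1 * gradNorm u (Phi p)) := by
          exact mul_le_mul_of_nonneg_left hw1 (abs_nonneg _)
      _ = Real.exp p.1 * (|u (Phi p)| * gradNorm u (Phi p)) := by rw [vv]; ring
  rcases le_or_gt 0 p.1 with hs | hs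
  · rw [if_pos hs]
    have h1le : 1 ≤ Real.sqrt ((Phi p).1 ^ 2 + (Phi p).2 ^ 2) := by
      rw [norm_Phi]; exact Real.one_le_exp hs
    have := (hdec _ hzmem).2 h1le
    rw [norm_Phi] at this
    calc |FF u p| ≤ Real.exp p.1 * (|u (Phi p)| * gradNorm u (Phi p)) := hFa
      _ ≤ Real.exp p.1 * (C * Real.exp p.1 ^ (-δ - 1)) :=
          mul_le_mul_of_nonneg_left this hE.le
      _ = C * Real.exp p.1 * Real.exp p.1 ^ (-δ - 1) := by ring
  · rw [if_neg (not_le.2 hs)]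
    have h1le : Real.sqrt ((Phi p).1 ^ 2 + (Phi p).2 ^ 2) ≤ 1 := by
      rw [norm_Phi]; exact Real.exp_le_one_iff.2 hs.le
    have := (hdec _ hzmem).1 h1le
    rw [norm_Phi] at this
    calc |FF u p| ≤ Real.exp p.1 * (|u (Phi p)| * gradNorm u (Phi p)) := hFa
      _ ≤ Real.exp p.1 * (C * Real.exp p.1 ^ (δ - 1)) :=
          mul_le_mul_of_nonneg_left this hE.le
      _ = C * Real.exp p.1 * Real.exp p.1 ^ (δ - 1) := by ring

end energy

lemma exp_rpow_eq (s y : ℝ) : Real.exp s * Real.exp s ^ y = Real.exp (s + s * y) := by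
  rw [Real.rpow_def_of_pos (Real.exp_pos s), Real.log_exp, ← Real.exp_add]

section energy

variable {α : ℝ} {u : ℝ × ℝ → ℝ} {U : Set (ℝ × ℝ)} {C δ : ℝ}

lemma integral_bound (hα₀ : 0 < α) (hUopen : IsOpen U)
    (hUsub : closure (sector α) \ {(0:ℝ×ℝ)} ⊆ U) (hUC1 : ContDiffOn ℝ 1 u U)
    (hu_harm : HarmonicOnSector α u)
    (hu_dir : ∀ x₁ : ℝ, 0 < x₁ → u (x₁, 0) = 0)
    (hu_neu : NeumannOnGamma2 α u)
    (hC : 0 < C) (hδ : 0 < δ)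
    (hdec : ∀ x ∈ closure (sector α) \ {(0 : ℝ × ℝ)},
        (Real.sqrt (x.1 ^ 2 + x.2 ^ 2) ≤ 1 →
          |u x| * gradNorm u x ≤ C * Real.sqrt (x.1 ^ 2 + x.2 ^ 2) ^ (δ - 1)) ∧
        (1 ≤ Real.sqrt (x.1 ^ 2 + x.2 ^ 2) →
          |u x| * gradNorm u x ≤ C * Real.sqrt (x.1 ^ 2 + x.2 ^ 2) ^ (-δ - 1)))
    (R : ℝ) (hR : 0 ≤ R) :
    ∫ p in Icc ((-R, (0:ℝ)) : ℝ × ℝ) ((R, α) : ℝ × ℝ), (w1 u p ^ 2 + w2 u p ^ 2)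
      ≤ 2 * C * α * Real.exp (-δ * R) := by
  have hle : ((-R, (0:ℝ)) : ℝ × ℝ) ≤ ((R, α) : ℝ × ℝ) :=
    Prod.mk_le_mk.2 ⟨by linarith, hα₀.le⟩
  -- continuity infrastructure on `T = Phi ⁻¹' U`
  have hsubT : Icc ((-R, (0:ℝ)) : ℝ × ℝ) ((R, α) : ℝ × ℝ) ⊆ Phi ⁻¹' U := by
    intro p hp
    exact mem_preimage.2 (hUsub (Phi_mem_closure hα₀ hp.1.2 hp.2.2))
  have hDu : ContinuousOn (fderiv ℝ u) U := hUC1.continuousOn_fderiv_of_isOpen hUopen le_rfl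
  have hmapsTo : MapsTo Phi (Phi ⁻¹' U) U := fun p hp => hp
  have hg1T : ContinuousOn (fun p => pd1 u (Phi p)) (Phi ⁻¹' U) := by
    exact (hDu.comp continuous_Phi.continuousOn hmapsTo).clm_apply continuousOn_const
  have hg2T : ContinuousOn (fun p => pd2 u (Phi p)) (Phi ⁻¹' U) := by
    exact (hDu.comp continuous_Phi.continuousOn hmapsTo).clm_apply continuousOn_const
  have hvvT : ContinuousOn (vv u) (Phi ⁻¹' U) :=
    hUC1.continuousOn.comp continuous_Phi.continuousOn hmapsTo
  have hec : Continuous fun p : ℝ × ℝ => Real.exp p.1 * Real.cos p.2 := by fun_prop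
  have hes : Continuous fun p : ℝ × ℝ => Real.exp p.1 * Real.sin p.2 := by fun_prop
  have hw1T : ContinuousOn (w1 u) (Phi ⁻¹' U) := by
    exact (hec.continuousOn.mul hg1T).add (hes.continuousOn.mul hg2T)
  have hw2T : ContinuousOn (w2 u) (Phi ⁻¹' U) := by
    exact ((hes.continuousOn.neg).mul hg1T).add (hec.continuousOn.mul hg2T)
  have hFFT : ContinuousOn (FF u) (Phi ⁻¹' U) := hvvT.mul hw1T
  have hGGT : ContinuousOn (GG u) (Phi ⁻¹' U) := hvvT.mul hw2T
  have hHT : ContinuousOn (fun p => w1 u p ^ 2 + w2 u p ^ 2) (Phi ⁻¹' U) :=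
    (hw1T.pow 2).add (hw2T.pow 2)
  have hHint : IntegrableOn (fun p => w1 u p ^ 2 + w2 u p ^ 2)
      (Icc ((-R, (0:ℝ)) : ℝ × ℝ) ((R, α) : ℝ × ℝ)) volume :=
    (hHT.mono hsubT).integrableOn_compact isCompact_Icc
  -- a.e. identification of the divergence with the energy density
  have hae : ∀ᵐ x : ℝ × ℝ, x ∈ Icc ((-R, (0:ℝ)) : ℝ × ℝ) ((R, α) : ℝ × ℝ) →
      fderiv ℝ (FF u) x (1, 0) + fderiv ℝ (GG u) x (0, 1) = w1 u x ^ 2 + w2 u x ^ 2 := by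
    have hfr : volume (frontier (Icc ((-R, (0:ℝ)) : ℝ × ℝ) ((R, α) : ℝ × ℝ))) = 0 :=
      (convex_Icc _ _).addHaar_frontier volume
    filter_upwards [measure_eq_zero_iff_ae_notMem.1 hfr] with x hx hxIcc
    have hxi : x ∈ interior (Icc ((-R, (0:ℝ)) : ℝ × ℝ) ((R, α) : ℝ × ℝ)) := by
      by_contra h
      apply hx
      rw [(isClosed_Icc (a := ((-R, (0:ℝ)) : ℝ × ℝ)) (b := ((R, α) : ℝ × ℝ))).frontier_eq]
      exact ⟨hxIcc, h⟩
    rw [Icc_prod_eq, interior_prod_eq, interior_Icc, interior_Icc] at hxi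
    exact (key u hu_harm (Phi_mem_sector hxi.2.1 hxi.2.2)).2.2
  -- divergence theorem
  have Hdf : ∀ x ∈ Ioo ((-R, (0:ℝ)) : ℝ × ℝ).1 ((R, α) : ℝ × ℝ).1 ×ˢ
      Ioo ((-R, (0:ℝ)) : ℝ × ℝ).2 ((R, α) : ℝ × ℝ).2 \ (∅ : Set (ℝ × ℝ)),
      HasFDerivAt (FF u) (fderiv ℝ (FF u) x) x := fun x hx =>
    ((key u hu_harm (Phi_mem_sector hx.1.2.1 hx.1.2.2)).1).hasFDerivAt
  have Hdg : ∀ x ∈ Ioo ((-R, (0:ℝ)) : ℝ × ℝ).1 ((R, α) : ℝ × ℝ).1 ×ˢ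
      Ioo ((-R, (0:ℝ)) : ℝ × ℝ).2 ((R, α) : ℝ × ℝ).2 \ (∅ : Set (ℝ × ℝ)),
      HasFDerivAt (GG u) (fderiv ℝ (GG u) x) x := fun x hx =>
    ((key u hu_harm (Phi_mem_sector hx.1.2.1 hx.1.2.2)).2.1).hasFDerivAt
  have Hi : IntegrableOn (fun x => fderiv ℝ (FF u) x (1, 0) + fderiv ℝ (GG u) x (0, 1))
      (Icc ((-R, (0:ℝ)) : ℝ × ℝ) ((R, α) : ℝ × ℝ)) volume :=
    hHint.congr ((ae_restrict_iff' measurableSet_Icc).2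
      (hae.mono fun x h hx => (h hx).symm))
  have hdiv := integral_divergence_prod_Icc_of_hasFDerivAt_off_countable_of_le
    (FF u) (GG u) (fun x => fderiv ℝ (FF u) x) (fun x => fderiv ℝ (GG u) x)
    ((-R, (0:ℝ)) : ℝ × ℝ) ((R, α) : ℝ × ℝ) hle ∅ countable_empty
    (hFFT.mono hsubT) (hGGT.mono hsubT) Hdf Hdg Hi
  have hIH : ∫ x in Icc ((-R, (0:ℝ)) : ℝ × ℝ) ((R, α) : ℝ × ℝ),
      (fderiv ℝ (FF u) x (1, 0) + fderiv ℝ (GG u) x (0, 1))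
      = ∫ x in Icc ((-R, (0:ℝ)) : ℝ × ℝ) ((R, α) : ℝ × ℝ), (w1 u x ^ 2 + w2 u x ^ 2) :=
    setIntegral_congr_ae measurableSet_Icc hae
  rw [hIH] at hdiv
  simp only [Prod.fst, Prod.snd] at hdiv
  -- bottom boundary term vanishes (Dirichlet)
  have hbot : ∀ x : ℝ, GG u (x, (0:ℝ)) = 0 := by
    intro x
    have hPhi0 : Phi (x, (0:ℝ)) = (Real.exp x, 0) := by simp [Phi]
    rw [GG, vv, hPhi0, hu_dir _ (Real.exp_pos x), zero_mul]
  -- top boundary term vanishes (Neumann)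
  have htop : ∀ x : ℝ, GG u (x, α) = 0 := by
    intro x
    have hw2x : w2 u (x, α) = Real.exp x *
        (-Real.sin α * pd1 u (Real.exp x * Real.cos α, Real.exp x * Real.sin α)
          + Real.cos α * pd2 u (Real.exp x * Real.cos α, Real.exp x * Real.sin α)) := by
      simp only [w2, Phi]
      ring
    rw [GG, hw2x, hu_neu (Real.exp x) (Real.exp_pos x), mul_zero, mul_zero]
  have hbot' : (∫ x in (-R)..R, GG u (x, (0:ℝ))) = 0 := by
    rw [intervalIntegral.integral_congr (g := fun _ => (0:ℝ)) fun x _ => hbot x]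
    simp
  have htop' : (∫ x in (-R)..R, GG u (x, α)) = 0 := by
    rw [intervalIntegral.integral_congr (g := fun _ => (0:ℝ)) fun x _ => htop x]
    simp
  -- side bounds
  have hright : ‖∫ y in (0:ℝ)..α, FF u (R, y)‖ ≤ C * Real.exp (-δ * R) * |α - 0| := by
    refine intervalIntegral.norm_integral_le_of_norm_le_const fun y hy => ?_
    rw [Set.uIoc_of_le hα₀.le] at hy
    have hb := FF_bound (U := U) hα₀ hUsub hC hδ hdec (p := (R, y)) hy.1.le hy.2
    simp only [if_pos hR] at hb
    rw [Real.norm_eq_abs]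
    calc |FF u (R, y)| ≤ C * Real.exp R * Real.exp R ^ (-δ - 1) := hb
      _ = C * Real.exp (-δ * R) := by
          rw [mul_assoc, exp_rpow_eq, show R + R * (-δ - 1) = -δ * R by ring]
  have hleft : ‖∫ y in (0:ℝ)..α, FF u (-R, y)‖ ≤ C * Real.exp (-δ * R) * |α - 0| := by
    refine intervalIntegral.norm_integral_le_of_norm_le_const fun y hy => ?_
    rw [Set.uIoc_of_le hα₀.le] at hy
    have hb := FF_bound (U := U) hα₀ hUsub hC hδ hdec (p := (-R, y)) hy.1.le hy.2
    rw [Real.norm_eq_abs]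
    rcases lt_or_eq_of_le hR with hR' | hR'
    · simp only [if_neg (not_le.2 (neg_lt_zero.2 hR'))] at hb
      calc |FF u (-R, y)| ≤ C * Real.exp (-R) * Real.exp (-R) ^ (δ - 1) := hb
        _ = C * Real.exp (-δ * R) := by
            rw [mul_assoc, exp_rpow_eq, show -R + -R * (δ - 1) = -δ * R by ring]
    · subst hR'
      rw [neg_zero] at hb ⊢
      simp only [if_pos le_rfl] at hb
      calc |FF u ((0:ℝ), y)| ≤ C * Real.exp 0 * Real.exp 0 ^ (-δ - 1) := hb
        _ = C * Real.exp (-δ * 0) := by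
            rw [mul_assoc, exp_rpow_eq]; norm_num
  -- put everything together
  rw [hdiv, htop', hbot']
  rw [Real.norm_eq_abs] at hright hleft
  have h1 : |α - 0| = α := by rw [sub_zero, abs_of_pos hα₀]
  rw [h1] at hright hleft
  have h2 := abs_le.1 hright
  have h3 := abs_le.1 hleft
  nlinarith [h2.1, h2.2, h3.1, h3.2]

end energy

section energy2

variable {α : ℝ} {u : ℝ × ℝ → ℝ} {U : Set (ℝ × ℝ)} {C δ : ℝ}

lemma H_contOn (hUopen : IsOpen U) (hUC1 : ContDiffOn ℝ 1 u U) :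
    ContinuousOn (fun p => w1 u p ^ 2 + w2 u p ^ 2) (Phi ⁻¹' U) := by
  have hDu : ContinuousOn (fderiv ℝ u) U := hUC1.continuousOn_fderiv_of_isOpen hUopen le_rfl
  have hmapsTo : MapsTo Phi (Phi ⁻¹' U) U := fun p hp => hp
  have hg1T : ContinuousOn (fun p => pd1 u (Phi p)) (Phi ⁻¹' U) :=
    (hDu.comp continuous_Phi.continuousOn hmapsTo).clm_apply continuousOn_const
  have hg2T : ContinuousOn (fun p => pd2 u (Phi p)) (Phi ⁻¹' U) :=
    (hDu.comp continuous_Phi.continuousOn hmapsTo).clm_apply continuousOn_const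
  have hec : Continuous fun p : ℝ × ℝ => Real.exp p.1 * Real.cos p.2 := by fun_prop
  have hes : Continuous fun p : ℝ × ℝ => Real.exp p.1 * Real.sin p.2 := by fun_prop
  have hw1T : ContinuousOn (w1 u) (Phi ⁻¹' U) :=
    (hec.continuousOn.mul hg1T).add (hes.continuousOn.mul hg2T)
  have hw2T : ContinuousOn (w2 u) (Phi ⁻¹' U) :=
    ((hes.continuousOn.neg).mul hg1T).add (hec.continuousOn.mul hg2T)
  exact (hw1T.pow 2).add (hw2T.pow 2)

lemma grad_zero (hα₀ : 0 < α) (hUopen : IsOpen U)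
    (hUsub : closure (sector α) \ {(0:ℝ×ℝ)} ⊆ U) (hUC1 : ContDiffOn ℝ 1 u U)
    (hC : 0 < C) (hδ : 0 < δ)
    (hbound : ∀ R : ℝ, 0 ≤ R →
      ∫ p in Icc ((-R, (0:ℝ)) : ℝ × ℝ) ((R, α) : ℝ × ℝ), (w1 u p ^ 2 + w2 u p ^ 2)
        ≤ 2 * C * α * Real.exp (-δ * R))
    {z : ℝ × ℝ} (hz : z ∈ sector α) : pd1 u z = 0 ∧ pd2 u z = 0 := by
  obtain ⟨r, θ, hr, hθ1, hθ2, rfl⟩ := hz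
  set p₀ : ℝ × ℝ := (Real.log r, θ) with hp₀def
  have hPhip : Phi p₀ = (r * Real.cos θ, r * Real.sin θ) := by
    simp only [Phi, hp₀def, Real.exp_log hr]
  have hz' : Phi p₀ ∈ sector α := by
    rw [hPhip]; exact ⟨r, θ, hr, hθ1, hθ2, rfl⟩
  -- `H p₀ = 0`
  have hsubT : ∀ q : ℝ × ℝ, 0 ≤ q.2 → q.2 ≤ α → q ∈ Phi ⁻¹' U := fun q h1 h2 =>
    mem_preimage.2 (hUsub (Phi_mem_closure hα₀ h1 h2))
  have hp₀T : p₀ ∈ Phi ⁻¹' U := hsubT p₀ hθ1.le (le_of_lt (lt_of_lt_of_le hθ2 le_rfl))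
  have hTopen : IsOpen (Phi ⁻¹' U) := hUopen.preimage continuous_Phi
  have hHcontAt : ContinuousAt (fun p => w1 u p ^ 2 + w2 u p ^ 2) p₀ :=
    (H_contOn hUopen hUC1).continuousAt (hTopen.mem_nhds hp₀T)
  have hH0 : w1 u p₀ ^ 2 + w2 u p₀ ^ 2 = 0 := by
    by_contra hne
    have hpos : 0 < w1 u p₀ ^ 2 + w2 u p₀ ^ 2 :=
      lt_of_le_of_ne (by positivity) (Ne.symm hne)
    set c := (w1 u p₀ ^ 2 + w2 u p₀ ^ 2) / 2 with hcdef
    have hc : 0 < c := by positivity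
    have hev : ∀ᶠ q in 𝓝 p₀, c < w1 u q ^ 2 + w2 u q ^ 2 :=
      hHcontAt.eventually (eventually_gt_nhds (by rw [hcdef]; linarith))
    obtain ⟨ε, hε, hball⟩ := Metric.eventually_nhds_iff.1 hev
    set ρ := min (ε / 2) (min 1 (min θ (α - θ))) with hρdef
    have hρ : 0 < ρ := by
      have := sub_pos.2 hθ2
      positivity
    set R := |Real.log r| + 1 with hRdef
    have hR : 0 ≤ R := by positivity
    have hballsub : Metric.ball p₀ ρ ⊆ Icc ((-R, (0:ℝ)) : ℝ × ℝ) ((R, α) : ℝ × ℝ) := by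
      intro q hq
      rw [Metric.mem_ball, Prod.dist_eq, max_lt_iff, Real.dist_eq, Real.dist_eq] at hq
      have h1 : |q.1 - p₀.1| < 1 := lt_of_lt_of_le hq.1 (hρdef ▸ le_trans (min_le_right _ _) (min_le_left _ _))
      have h2 : |q.2 - p₀.2| < min θ (α - θ) := lt_of_lt_of_le hq.2 (hρdef ▸ le_trans (min_le_right _ _) (min_le_right _ _))
      have h1' := abs_lt.1 h1
      have h2' := abs_lt.1 h2
      have hq2a : 0 ≤ q.2 := by
        have : -θ < q.2 - p₀.2 := lt_of_le_of_lt (neg_le_neg (min_le_left θ (α - θ))) h2'.1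
        simp only [hp₀def] at this ⊢
        linarith
      have hq2b : q.2 ≤ α := by
        have : q.2 - p₀.2 < α - θ := lt_of_lt_of_le h2'.2 (min_le_right _ _)
        simp only [hp₀def] at this ⊢
        linarith
      have hq1a : -R ≤ q.1 := by
        have := neg_abs_le (Real.log r)
        simp only [hp₀def] at h1'
        simp only [hRdef]
        linarith [h1'.1]
      have hq1b : q.1 ≤ R := by
        have := le_abs_self (Real.log r)
        simp only [hp₀def] at h1'
        simp only [hRdef]
        linarith [h1'.2]
      exact ⟨⟨hq1a, hq2a⟩, ⟨hq1b, hq2b⟩⟩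
    -- integrability of H on the box
    have hHint : IntegrableOn (fun p => w1 u p ^ 2 + w2 u p ^ 2)
        (Icc ((-R, (0:ℝ)) : ℝ × ℝ) ((R, α) : ℝ × ℝ)) volume := by
      refine ((H_contOn hUopen hUC1).mono ?_).integrableOn_compact isCompact_Icc
      intro q hq
      exact hsubT q hq.1.2 hq.2.2
    -- the integral over the box is ≤ 0
    have hIle : ∫ p in Icc ((-R, (0:ℝ)) : ℝ × ℝ) ((R, α) : ℝ × ℝ),
        (w1 u p ^ 2 + w2 u p ^ 2) ≤ 0 := by
      have htends : Tendsto (fun t : ℝ => 2 * C * α * Real.exp (-δ * t)) atTop (𝓝 0) := by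
        have h1 : Tendsto (fun t : ℝ => δ * t) atTop atTop :=
          Tendsto.const_mul_atTop hδ tendsto_id
        have h2 : Tendsto (fun t : ℝ => Real.exp (-(δ * t))) atTop (𝓝 0) :=
          Real.tendsto_exp_neg_atTop_nhds_zero.comp h1
        have h3 : Tendsto (fun t : ℝ => 2 * C * α * Real.exp (-(δ * t))) atTop (𝓝 (2 * C * α * 0)) :=
          h2.const_mul _
        rw [mul_zero] at h3
        convert h3 using 2 with t
        rw [neg_mul]
      refine ge_of_tendsto htends ?_
      rw [eventually_atTop]
      refine ⟨R, fun R' hR' => ?_⟩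
      have hmono : ∫ p in Icc ((-R, (0:ℝ)) : ℝ × ℝ) ((R, α) : ℝ × ℝ),
          (w1 u p ^ 2 + w2 u p ^ 2)
          ≤ ∫ p in Icc ((-R', (0:ℝ)) : ℝ × ℝ) ((R', α) : ℝ × ℝ),
          (w1 u p ^ 2 + w2 u p ^ 2) := by
        refine setIntegral_mono_set ?_ ?_ ?_
        · refine ((H_contOn hUopen hUC1).mono ?_).integrableOn_compact isCompact_Icc
          intro q hq
          exact hsubT q hq.1.2 hq.2.2
        · filter_upwards with q
          positivity
        · refine (Icc_subset_Icc ?_ ?_).eventuallyLE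
          · exact Prod.mk_le_mk.2 ⟨by linarith, le_rfl⟩
          · exact Prod.mk_le_mk.2 ⟨by linarith, le_rfl⟩
      exact le_trans hmono (hbound R' (le_trans hR hR'))
    -- but the integral over the ball is positive
    have hint_ball : IntegrableOn (fun p => w1 u p ^ 2 + w2 u p ^ 2)
        (Metric.ball p₀ ρ) volume := hHint.mono_set hballsub
    have hlow : c * (volume (Metric.ball p₀ ρ)).toReal
        ≤ ∫ p in Metric.ball p₀ ρ, (w1 u p ^ 2 + w2 u p ^ 2) := by
      refine setIntegral_ge_of_const_le_real Metric.isOpen_ball.measurableSet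
        (measure_ball_lt_top).ne (fun x hx => (hball (lt_of_lt_of_le (Metric.mem_ball.1 hx)
          (le_trans (hρdef ▸ min_le_left _ _) (by linarith)))).le)
        hint_ball
    have hball_le : ∫ p in Metric.ball p₀ ρ, (w1 u p ^ 2 + w2 u p ^ 2)
        ≤ ∫ p in Icc ((-R, (0:ℝ)) : ℝ × ℝ) ((R, α) : ℝ × ℝ),
          (w1 u p ^ 2 + w2 u p ^ 2) := by
      refine setIntegral_mono_set hHint ?_ hballsub.eventuallyLE
      filter_upwards with q
      positivity
    have hvolpos : 0 < (volume (Metric.ball p₀ ρ)).toReal :=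
      ENNReal.toReal_pos (Metric.measure_ball_pos volume p₀ hρ).ne'
        (measure_ball_lt_top).ne
    nlinarith
  -- deduce the vanishing of the partials
  have hw1 : w1 u p₀ = 0 := by nlinarith [sq_nonneg (w1 u p₀), sq_nonneg (w2 u p₀)]
  have hw2 : w2 u p₀ = 0 := by nlinarith [sq_nonneg (w1 u p₀), sq_nonneg (w2 u p₀)]
  have hE := Real.exp_pos p₀.1
  have hsc := Real.sin_sq_add_cos_sq p₀.2
  have hg1 : Real.exp p₀.1 * pd1 u (Phi p₀) =
      Real.cos p₀.2 * w1 u p₀ - Real.sin p₀.2 * w2 u p₀ := by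
    simp only [w1, w2]
    linear_combination (-(Real.exp p₀.1 * pd1 u (Phi p₀))) * hsc
  have hg2 : Real.exp p₀.1 * pd2 u (Phi p₀) =
      Real.sin p₀.2 * w1 u p₀ + Real.cos p₀.2 * w2 u p₀ := by
    simp only [w1, w2]
    linear_combination (-(Real.exp p₀.1 * pd2 u (Phi p₀))) * hsc
  rw [hw1, hw2] at hg1 hg2
  simp only [mul_zero, sub_zero, add_zero, zero_add] at hg1 hg2
  constructor
  · have := mul_eq_zero.1 hg1
    rcases this with h | h
    · exact absurd h hE.ne'
    · rwa [hPhip] at h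
  · have := mul_eq_zero.1 hg2
    rcases this with h | h
    · exact absurd h hE.ne'
    · rwa [hPhip] at h

end energy2

lemma final {α : ℝ} {u : ℝ × ℝ → ℝ} (hα₀ : 0 < α)
    (hu_cont : ContinuousOn u (closure (sector α)))
    (hu_harm : HarmonicOnSector α u)
    (hu_dir : ∀ x₁ : ℝ, 0 < x₁ → u (x₁, 0) = 0)
    (hgrad : ∀ z ∈ sector α, pd1 u z = 0 ∧ pd2 u z = 0) :
    ∀ x ∈ sector α, u x = 0 := by
  intro x hx
  obtain ⟨r, θ, hr, hθ1, hθ2, rfl⟩ := hx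
  set p₀ : ℝ × ℝ := (Real.log r, θ) with hp₀def
  have hPhip : Phi p₀ = (r * Real.cos θ, r * Real.sin θ) := by
    simp only [Phi, hp₀def, Real.exp_log hr]
  -- the strip
  set S : Set (ℝ × ℝ) := (univ : Set ℝ) ×ˢ Ioo (0:ℝ) α with hSdef
  have hSconv : Convex ℝ S := convex_univ.prod (convex_Ioo _ _)
  have hSopen : IsOpen S := isOpen_univ.prod isOpen_Ioo
  have hmem : ∀ p : ℝ × ℝ, p ∈ S → Phi p ∈ sector α := fun p hp =>
    Phi_mem_sector hp.2.1 hp.2.2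
  have hvd : ∀ p ∈ S, HasFDerivAt (vv u) (0 : ℝ × ℝ →L[ℝ] ℝ) p := by
    intro p hp
    have hz := hmem p hp
    have hd : HasFDerivAt (vv u) ((fderiv ℝ u (Phi p)).comp (LL p)) p :=
      (hu_harm _ hz).1.hasFDerivAt.comp p (hasFDerivAt_Phi p)
    have hDu0 : fderiv ℝ u (Phi p) = 0 := by
      obtain ⟨h1, h2⟩ := hgrad _ hz
      apply ContinuousLinearMap.ext
      intro w
      rw [clm_apply_eq]
      have e1 : fderiv ℝ u (Phi p) (1, 0) = 0 := h1
      have e2 : fderiv ℝ u (Phi p) (0, 1) = 0 := h2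
      rw [e1, e2]
      simp
    rwa [hDu0, ContinuousLinearMap.zero_comp] at hd
  have hvdiff : DifferentiableOn ℝ (vv u) S := fun p hp =>
    (hvd p hp).differentiableAt.differentiableWithinAt
  have hfd0 : ∀ p ∈ S, fderivWithin ℝ (vv u) S p = 0 := by
    intro p hp
    rw [fderivWithin_of_isOpen hSopen hp]
    exact (hvd p hp).fderiv
  have hp₀S : p₀ ∈ S := ⟨mem_univ _, hθ1, hθ2⟩
  have hconst : ∀ t, t ∈ Ioo (0:ℝ) α → vv u (p₀.1, t) = vv u p₀ := fun t ht =>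
    hSconv.is_const_of_fderivWithin_eq_zero hvdiff hfd0 ⟨mem_univ _, ht⟩ hp₀S
  -- limit to the bottom edge
  have hψcont : ContinuousWithinAt (fun t : ℝ => u (Phi (p₀.1, t))) (Ioo (0:ℝ) α) 0 := by
    have hpt : Phi (p₀.1, (0:ℝ)) ∈ closure (sector α) :=
      (Phi_mem_closure hα₀ le_rfl hα₀.le).1
    have hc1 : ContinuousWithinAt u (closure (sector α)) (Phi (p₀.1, 0)) := hu_cont _ hpt
    have hc2 : ContinuousWithinAt (fun t : ℝ => Phi (p₀.1, t)) (Ioo (0:ℝ) α) 0 :=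
      (continuous_Phi.comp (continuous_const.prodMk continuous_id)).continuousWithinAt
    exact ContinuousWithinAt.comp (g := u) (f := fun t : ℝ => Phi (p₀.1, t)) hc1 hc2
      (fun t ht => subset_closure (Phi_mem_sector ht.1 ht.2))
  have hψ0 : u (Phi (p₀.1, (0:ℝ))) = 0 := by
    have : Phi (p₀.1, (0:ℝ)) = (Real.exp p₀.1, 0) := by simp [Phi]
    rw [this]
    exact hu_dir _ (Real.exp_pos _)
  have hne : (𝓝[Ioo (0:ℝ) α] 0).NeBot := by
    rw [nhdsWithin_Ioo_eq_nhdsGT hα₀]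
    infer_instance
  have hT1 : Tendsto (fun t : ℝ => u (Phi (p₀.1, t))) (𝓝[Ioo (0:ℝ) α] 0) (𝓝 0) := by
    have := hψcont
    rw [ContinuousWithinAt] at this
    rwa [hψ0] at this
  have hT2 : Tendsto (fun t : ℝ => u (Phi (p₀.1, t))) (𝓝[Ioo (0:ℝ) α] 0) (𝓝 (vv u p₀)) := by
    refine tendsto_const_nhds.congr' ?_
    filter_upwards [self_mem_nhdsWithin] with t ht
    exact (hconst t ht).symm
  have : vv u p₀ = 0 := tendsto_nhds_unique hT2 hT1
  rw [vv, hPhip] at this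
  exact this

end SectorAux

/-- Uniqueness for the homogeneous mixed problem: a finite-energy
harmonic function on the sector `G`, continuous on `cl(G)`, with zero Dirichlet data on
`Γ₁` and zero Neumann data on `Γ₂`, and with the stated decay at the corner and at
infinity, vanishes identically on `G`. -/
theorem stmt_11 (α : ℝ) (hα₀ : 0 < α) (hα₁ : α ≤ Real.pi)
    (u : ℝ × ℝ → ℝ)
    (hu_cont : ContinuousOn u (closure (sector α)))
    (hu_smooth : ∃ U : Set (ℝ × ℝ), IsOpen U ∧
      closure (sector α) \ {(0 : ℝ × ℝ)} ⊆ U ∧ ContDiffOn ℝ 1 u U)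
    (hu_harm : HarmonicOnSector α u)
    (hu_dir : ∀ x₁ : ℝ, 0 < x₁ → u (x₁, 0) = 0)
    (hu_neu : NeumannOnGamma2 α u)
    (hdecay : ∃ C : ℝ, 0 < C ∧ ∃ δ : ℝ, 0 < δ ∧
      ∀ x ∈ closure (sector α) \ {(0 : ℝ × ℝ)},
        (Real.sqrt (x.1 ^ 2 + x.2 ^ 2) ≤ 1 →
          |u x| * gradNorm u x ≤ C * Real.sqrt (x.1 ^ 2 + x.2 ^ 2) ^ (δ - 1)) ∧
        (1 ≤ Real.sqrt (x.1 ^ 2 + x.2 ^ 2) →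
          |u x| * gradNorm u x ≤ C * Real.sqrt (x.1 ^ 2 + x.2 ^ 2) ^ (-δ - 1)))
    (hint : IntegrableOn (gradSq u) (sector α) volume) :
    ∀ x ∈ sector α, u x = 0 := by
  obtain ⟨U, hUopen, hUsub, hUC1⟩ := hu_smooth
  obtain ⟨C, hC, δ, hδ, hdec⟩ := hdecay
  have hbound : ∀ R : ℝ, 0 ≤ R →
      ∫ p in Set.Icc ((-R, (0:ℝ)) : ℝ × ℝ) ((R, α) : ℝ × ℝ), (w1 u p ^ 2 + w2 u p ^ 2)
        ≤ 2 * C * α * Real.exp (-δ * R) :=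
    fun R hR => integral_bound hα₀ hUopen hUsub hUC1 hu_harm hu_dir hu_neu hC hδ hdec R hR
  have hgrad : ∀ z ∈ sector α, pd1 u z = 0 ∧ pd2 u z = 0 :=
    fun z hz => grad_zero hα₀ hUopen hUsub hUC1 hC hδ hbound hz
  exact final hα₀ hu_cont hu_harm hu_dir hgrad
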